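/- Let k ≥ 2, k ≠ 3, and ℓ ≥ 2 be integers, and let H(X) = B_{k+1}(ℓX+1) - B_{k+1}(X+1) ∈ ℚ[X]. Then H, viewed over the complex numbers (or an algebraic closure of ℚ), has at least three distinct roots. -/

import Mathlib

open Polynomial

lemma bern_even_ne_zero {n : ℕ} (he : Even n) (h0 : n ≠ 0) : _root_.bernoulli n ≠ 0 := by
  obtain ⟨m, rfl⟩ := he
  have hm : m ≠ 0 := by rintro rfl; simp at h0
  have h2 : m + m = 2 * m := by ring
  rw [h2]
  intro h
  have hz := riemannZeta_two_mul_nat hm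
  rw [h] at hz
  have hcast : (2 * (m : ℂ)) = ((2 * m : ℕ) : ℂ) := by push_cast; ring
  have hne : riemannZeta (2 * (m : ℂ)) ≠ 0 := by
    rw [hcast]
    apply riemannZeta_ne_zero_of_one_lt_re
    rw [Complex.natCast_re]
    exact_mod_cast (by omega : 1 < 2 * m)
  simp at hz
  exact hne hz

lemma bern'_even_ne_zero {n : ℕ} (he : Even n) (h0 : n ≠ 0) : bernoulli' n ≠ 0 := by
  have h1 : n ≠ 1 := by rintro rfl; simp [Nat.even_iff] at he
  rw [← bernoulli_eq_bernoulli'_of_ne_one h1]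
  exact bern_even_ne_zero he h0

lemma bern_natDegree (n : ℕ) : (Polynomial.bernoulli n).natDegree ≤ n := by
  rw [Polynomial.bernoulli_def]
  apply natDegree_sum_le_of_forall_le
  intro i hi
  exact (natDegree_monomial_le _).trans (by have := Finset.mem_range.mp hi; omega)

lemma iter_deriv_bern_comp (n : ℕ) (a : ℚ) (j : ℕ) (hj : j ≤ n) :
    derivative^[j] ((Polynomial.bernoulli n).comp (C a * X + 1)) =
      C ((n.descFactorial j : ℚ) * a ^ j) * (Polynomial.bernoulli (n - j)).comp (C a * X + 1) := by
  induction j with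
  | zero => simp
  | succ j ih =>
    rw [Function.iterate_succ_apply', ih (by omega), derivative_C_mul, derivative_comp,
      Polynomial.derivative_bernoulli (n - j)]
    have h1 : derivative (C a * X + 1) = C a := by simp
    have h2 : n - j - 1 = n - (j + 1) := by omega
    have h3 : ((n - j : ℕ) : ℚ[X]) = C ((n - j : ℕ) : ℚ) := by simp
    rw [h1, mul_comp, natCast_comp, h3, h2, Nat.descFactorial_succ]
    ring_nf
    simp only [← C_mul]
    rw [mul_comm]
    congr 1
    push_cast [Nat.cast_sub (show j ≤ n by omega)]
    ring

lemma H_coeff (k ℓ : ℕ) (j : ℕ) (hj : j ≤ k + 1) :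
    (Nat.factorial j : ℚ) * ((Polynomial.bernoulli (k + 1)).comp (C (ℓ : ℚ) * X + 1) -
      (Polynomial.bernoulli (k + 1)).comp (X + 1)).coeff j =
    (((k+1).descFactorial j : ℚ)) * ((ℓ : ℚ) ^ j - 1) * bernoulli' (k + 1 - j) := by
  have hX : (X + 1 : ℚ[X]) = C (1 : ℚ) * X + 1 := by simp
  rw [hX]
  have hcd := coeff_iterate_derivative (R := ℚ) (k := j)
    ((Polynomial.bernoulli (k + 1)).comp (C (ℓ : ℚ) * X + 1) -
      (Polynomial.bernoulli (k + 1)).comp (X + 1)) 0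
  rw [iterate_derivative_sub, hX, iter_deriv_bern_comp _ _ _ hj,
    iter_deriv_bern_comp _ _ _ hj, zero_add, Nat.descFactorial_self] at hcd
  have heval : ∀ a b : ℚ, (C b * (Polynomial.bernoulli (k + 1 - j)).comp (C a * X + 1)).coeff 0
      = b * bernoulli' (k + 1 - j) := by
    intro a b
    rw [coeff_zero_eq_eval_zero]
    simp [eval_comp, Polynomial.bernoulli_eval_one]
  rw [coeff_sub, heval, heval, nsmul_eq_mul] at hcd
  linear_combination -hcd

noncomputable def Hp (k ℓ : ℕ) : ℚ[X] :=
  (Polynomial.bernoulli (k + 1)).comp (C (ℓ : ℚ) * X + 1) -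
      (Polynomial.bernoulli (k + 1)).comp (X + 1)

lemma Hp_coeff_fac (k ℓ j : ℕ) (hj : j ≤ k + 1) :
    (Nat.factorial j : ℚ) * (Hp k ℓ).coeff j =
    (((k+1).descFactorial j : ℚ)) * ((ℓ : ℚ) ^ j - 1) * bernoulli' (k + 1 - j) :=
  H_coeff k ℓ j hj

lemma Hp_coeff_zero' (k ℓ j : ℕ) (hj : j ≤ k + 1) (hb : bernoulli' (k + 1 - j) = 0) :
    (Hp k ℓ).coeff j = 0 := by
  have h := Hp_coeff_fac k ℓ j hj
  rw [hb, mul_zero] at h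
  have hf : (Nat.factorial j : ℚ) ≠ 0 := by exact_mod_cast (Nat.factorial_pos _).ne'
  exact (mul_eq_zero.mp h).resolve_left hf

lemma Hp_coeff_nz (k ℓ j : ℕ) (hℓ : 2 ≤ ℓ) (hj1 : 1 ≤ j) (hj : j ≤ k + 1)
    (hb : bernoulli' (k + 1 - j) ≠ 0) : (Hp k ℓ).coeff j ≠ 0 := by
  have h := Hp_coeff_fac k ℓ j hj
  intro hz
  rw [hz, mul_zero] at h
  have hd : (((k+1).descFactorial j : ℚ)) ≠ 0 := by
    have h0 : (k+1).descFactorial j ≠ 0 := by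
      rw [Ne, Nat.descFactorial_eq_zero_iff_lt]; omega
    exact_mod_cast h0
  have hp : ((ℓ : ℚ) ^ j - 1) ≠ 0 := by
    have h1 : (1:ℚ) < (ℓ:ℚ) := by exact_mod_cast (by omega : 1 < ℓ)
    exact sub_ne_zero.mpr (ne_of_gt (one_lt_pow₀ h1 (by omega)))
  exact hb (by
    rcases mul_eq_zero.mp h.symm with h' | h'
    · rcases mul_eq_zero.mp h' with h'' | h''
      · exact absurd h'' hd
      · exact absurd h'' hp
    · exact h')

lemma Hp_coeff_top (k ℓ : ℕ) : (Hp k ℓ).coeff (k+1) = (ℓ:ℚ)^(k+1) - 1 := by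
  have h := Hp_coeff_fac k ℓ (k+1) le_rfl
  rw [Nat.descFactorial_self, Nat.sub_self, bernoulli'_zero] at h
  have hf : (Nat.factorial (k+1) : ℚ) ≠ 0 := by exact_mod_cast (Nat.factorial_pos _).ne'
  rw [mul_one] at h
  exact mul_left_cancel₀ hf h

lemma hpow_ne (ℓ : ℕ) (hℓ : 2 ≤ ℓ) (j : ℕ) (hj : 1 ≤ j) : ((ℓ : ℚ) ^ j - 1) ≠ 0 := by
  have h1 : (1:ℚ) < (ℓ:ℚ) := by exact_mod_cast (by omega : 1 < ℓ)
  exact sub_ne_zero.mpr (ne_of_gt (one_lt_pow₀ h1 (by omega)))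

lemma Hp_natDegree (k ℓ : ℕ) (hℓ : 2 ≤ ℓ) : (Hp k ℓ).natDegree = k + 1 := by
  have hle : (Hp k ℓ).natDegree ≤ k + 1 := by
    apply (natDegree_sub_le _ _).trans
    have h1 : (C (ℓ:ℚ) * X + 1 : ℚ[X]).natDegree ≤ 1 := by
      apply (natDegree_add_le _ _).trans
      simp only [natDegree_one, max_le_iff]
      exact ⟨(natDegree_C_mul_le _ _).trans (by simp), by omega⟩
    have h2 : (X + 1 : ℚ[X]).natDegree ≤ 1 := by
      apply (natDegree_add_le _ _).trans; simp
    have b1 := (natDegree_comp_le (p := Polynomial.bernoulli (k+1)) (q := C (ℓ:ℚ) * X + 1)).trans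
      (Nat.mul_le_mul (bern_natDegree _) h1)
    have b2 := (natDegree_comp_le (p := Polynomial.bernoulli (k+1)) (q := X + 1)).trans
      (Nat.mul_le_mul (bern_natDegree _) h2)
    simp only [mul_one] at b1 b2
    omega
  refine le_antisymm hle (le_natDegree_of_ne_zero ?_)
  rw [Hp_coeff_top k ℓ]
  exact hpow_ne ℓ hℓ (k+1) (by omega)

lemma Hp_ne_zero (k ℓ : ℕ) (hℓ : 2 ≤ ℓ) : Hp k ℓ ≠ 0 := by
  intro h
  have := Hp_coeff_top k ℓ
  rw [h, coeff_zero] at this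
  exact hpow_ne ℓ hℓ (k+1) (by omega) this.symm

lemma Hp_coeff0 (k ℓ : ℕ) : (Hp k ℓ).coeff 0 = 0 := by
  have h := Hp_coeff_fac k ℓ 0 (by omega)
  simpa using h

open Polynomial in
theorem stmt_11 (k ℓ : ℕ) (hk : 2 ≤ k) (hk3 : k ≠ 3) (hℓ : 2 ≤ ℓ) :
    3 ≤ ((((Polynomial.bernoulli (k + 1)).comp (C (ℓ : ℚ) * X + 1) -
      (Polynomial.bernoulli (k + 1)).comp (X + 1)).map
        (algebraMap ℚ ℂ)).roots.toFinset.card) := by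
  show 3 ≤ (((Hp k ℓ).map (algebraMap ℚ ℂ)).roots.toFinset.card)
  set f := algebraMap ℚ ℂ with hf
  set Hc := (Hp k ℓ).map f with hHc
  have hinj : Function.Injective f := (algebraMap ℚ ℂ).injective
  have hcne : Hc ≠ 0 := by
    rw [hHc, Ne, Polynomial.map_eq_zero_iff hinj]
    exact Hp_ne_zero k ℓ hℓ
  have hcdeg : Hc.natDegree = k + 1 := by
    rw [hHc, natDegree_map_eq_of_injective hinj, Hp_natDegree k ℓ hℓ]
  have hsp : Splits Hc := IsAlgClosed.splits Hc
  have hcard : Hc.roots.card = k + 1 := (splits_iff_card_roots.mp hsp).trans hcdeg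
  have hmapz : ∀ j : ℕ, (Hp k ℓ).coeff j = 0 → Hc.coeff j = 0 := by
    intro j h; rw [hHc, coeff_map, h, map_zero]
  have hmapnz : ∀ j : ℕ, (Hp k ℓ).coeff j ≠ 0 → Hc.coeff j ≠ 0 := by
    intro j h; rw [hHc, coeff_map]
    exact fun hz => h (hinj (by rw [hz, map_zero]))
  have h0root : (0:ℂ) ∈ Hc.roots := by
    rw [mem_roots hcne]
    show Hc.eval 0 = 0
    rw [← coeff_zero_eq_eval_zero]
    exact hmapz 0 (Hp_coeff0 k ℓ)
  by_contra hcon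
  push_neg at hcon
  set T := Hc.roots.toFinset with hT
  have h0T : (0:ℂ) ∈ T := Multiset.mem_toFinset.mpr h0root
  have hT1 : 1 ≤ T.card := Finset.card_pos.mpr ⟨0, h0T⟩
  have heq : Hc = C Hc.leadingCoeff * (Hc.roots.map fun a => X - C a).prod :=
    hsp.eq_prod_roots
  set c := Hc.leadingCoeff with hcdef
  have hc : c ≠ 0 := leadingCoeff_ne_zero.mpr hcne
  have hprod : (Hc.roots.map fun a => X - C a).prod
      = ∏ a ∈ T, (X - C a) ^ (Hc.roots.count a) :=
    Finset.prod_multiset_map_count _ _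
  rw [hprod] at heq
  -- coefficient facts over ℂ
  have hA1ne : Even k → Hc.coeff 1 ≠ 0 := by
    intro hke
    refine hmapnz 1 (Hp_coeff_nz k ℓ 1 hℓ le_rfl (by omega) ?_)
    have : k + 1 - 1 = k := by omega
    rw [this]
    exact bern'_even_ne_zero hke (by omega)
  have hA1z : Odd k → Hc.coeff 1 = 0 := by
    intro hko
    refine hmapz 1 (Hp_coeff_zero' k ℓ 1 (by omega) ?_)
    have : k + 1 - 1 = k := by omega
    rw [this]
    exact bernoulli'_eq_zero_of_odd hko (by omega)
  have hA2ne : Odd k → Hc.coeff 2 ≠ 0 := by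
    intro hko
    refine hmapnz 2 (Hp_coeff_nz k ℓ 2 hℓ (by omega) (by omega) ?_)
    have : k + 1 - 2 = k - 1 := by omega
    rw [this]
    refine bern'_even_ne_zero ?_ (by omega)
    rcases hko with ⟨m, hm⟩
    exact ⟨m, by omega⟩
  have hA2z : Even k → 4 ≤ k → Hc.coeff 2 = 0 := by
    intro hke hk4
    refine hmapz 2 (Hp_coeff_zero' k ℓ 2 (by omega) ?_)
    have : k + 1 - 2 = k - 1 := by omega
    rw [this]
    refine bernoulli'_eq_zero_of_odd ?_ (by omega)
    rw [Nat.odd_iff]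
    rw [Nat.even_iff] at hke
    omega
  have hA3z : Odd k → 5 ≤ k → Hc.coeff 3 = 0 := by
    intro hko hk5
    refine hmapz 3 (Hp_coeff_zero' k ℓ 3 (by omega) ?_)
    have : k + 1 - 3 = k - 2 := by omega
    rw [this]
    refine bernoulli'_eq_zero_of_odd ?_ (by omega)
    rw [Nat.odd_iff] at hko ⊢
    omega
  have hcases : T.card = 1 ∨ T.card = 2 := by omega
  rcases hcases with h1 | h2
  · -- one distinct root: Hc = C c * X^(k+1)
    obtain ⟨a, ha⟩ := Finset.card_eq_one.mp h1
    have ha0 : a = 0 := by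
      have := h0T
      rw [ha, Finset.mem_singleton] at this
      exact this.symm
    subst ha0
    have hall : ∀ b ∈ Hc.roots, (0:ℂ) = b := by
      intro b hb
      have := Multiset.mem_toFinset.mpr hb
      rw [← hT, ha, Finset.mem_singleton] at this
      exact this.symm
    have hcount : Hc.roots.count 0 = k + 1 := by
      rw [← hcard]
      exact Multiset.count_eq_card.mpr hall
    rw [ha, Finset.prod_singleton, hcount] at heq
    have heq2 : Hc = C c * X ^ (k+1) := by rw [heq]; simp
    have hzz : ∀ j : ℕ, j ≤ 2 → Hc.coeff j = 0 := by
      intro j hj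
      rw [heq2, coeff_C_mul, coeff_X_pow, if_neg (by omega), mul_zero]
    rcases Nat.even_or_odd k with hke | hko
    · exact hA1ne hke (hzz 1 (by omega))
    · exact hA2ne hko (hzz 2 (by omega))
  · -- two distinct roots
    obtain ⟨x, y, hxy, hTxy⟩ := Finset.card_eq_two.mp h2
    obtain ⟨b, hbne, hTb⟩ : ∃ b : ℂ, b ≠ 0 ∧ T = {0, b} := by
      have h0m : (0:ℂ) = x ∨ (0:ℂ) = y := by
        have := h0T
        rw [hTxy, Finset.mem_insert, Finset.mem_singleton] at this
        exact this
      rcases h0m with h | h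
      · exact ⟨y, by rintro rfl; exact hxy h.symm, by rw [hTxy, ← h]⟩
      · exact ⟨x, by rintro rfl; exact hxy h, by rw [hTxy, ← h, Finset.pair_comm]⟩
    have hbroot : b ∈ Hc.roots := by
      apply Multiset.mem_toFinset.mp
      rw [← hT, hTb]
      simp
    set p := Hc.roots.count 0 with hpdef
    set q := Hc.roots.count b with hqdef
    have hp1 : 1 ≤ p := by
      rw [hpdef, Nat.one_le_iff_ne_zero, Ne, Multiset.count_eq_zero]
      simpa using h0root
    have hq1 : 1 ≤ q := by
      rw [hqdef, Nat.one_le_iff_ne_zero, Ne, Multiset.count_eq_zero]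
      simpa using hbroot
    have hpq : p + q = k + 1 := by
      have hsum := Multiset.toFinset_sum_count_eq Hc.roots
      rw [← hT, hTb, Finset.sum_pair (Ne.symm hbne)] at hsum
      rw [hpdef, hqdef, hsum, hcard]
    rw [hTb, Finset.prod_pair (Ne.symm hbne)] at heq
    have heq2 : Hc = (C c * (X - C b) ^ q) * X ^ p := by
      rw [heq]; rw [map_zero, sub_zero]; ring
    have hXC : (X - C b : ℂ[X]) = X + C (-b) := by rw [map_neg]; ring
    have hcoeff : ∀ j : ℕ, Hc.coeff j =
        if p ≤ j then (C c * (X - C b) ^ q).coeff (j - p) else 0 := by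
      intro j
      rw [heq2, coeff_mul_X_pow']
    have hg0 : (C c * (X - C b) ^ q).coeff 0 = c * (-b) ^ q := by
      rw [coeff_C_mul, hXC, coeff_X_add_C_pow]
      simp
    have hg1 : (C c * (X - C b) ^ q).coeff 1 = c * ((-b) ^ (q - 1) * q) := by
      rw [coeff_C_mul, hXC, coeff_X_add_C_pow, Nat.choose_one_right]
    have hnb : (-b : ℂ) ≠ 0 := neg_ne_zero.mpr hbne
    rcases Nat.even_or_odd k with hke | hko
    · -- k even
      have hA1 := hA1ne hke
      have hp_eq : p = 1 := by
        by_contra hne1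
        have hp2 : 2 ≤ p := by omega
        exact hA1 (by rw [hcoeff 1, if_neg (by omega)])
      have hq_eq : q = k := by omega
      rcases Nat.lt_or_ge k 4 with hk4 | hk4
      · -- k = 2
        have hk2 : k = 2 := by
          rw [Nat.even_iff] at hke; omega
        subst hk2
        have hq2 : q = 2 := by omega
        -- complex coefficient identities
        have e1 : Hc.coeff 1 = c * (-b) ^ 2 := by
          rw [hcoeff 1, if_pos (by omega)]
          have h10 : 1 - p = 0 := by omega
          rw [h10, hg0, hq2]
        have e2 : Hc.coeff 2 = c * ((-b) ^ 1 * 2) := by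
          rw [hcoeff 2, if_pos (by omega)]
          have h21 : 2 - p = 1 := by omega
          rw [h21, hg1, hq2]
          norm_num
        have e3 : Hc.coeff 3 = c := by
          rw [hcdef, leadingCoeff, hcdeg]
        have key : Hc.coeff 2 ^ 2 = 4 * (Hc.coeff 3 * Hc.coeff 1) := by
          rw [e1, e2, e3]; ring
        have key2 := key
        simp only [hHc, coeff_map] at key2
        have key' : (Hp 2 ℓ).coeff 2 ^ 2 = 4 * ((Hp 2 ℓ).coeff 3 * (Hp 2 ℓ).coeff 1) := by
          apply hinj
          rw [map_pow, map_mul, map_mul, map_ofNat]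
          exact key2
        have r1 := Hp_coeff_fac 2 ℓ 1 (by omega)
        have r2 := Hp_coeff_fac 2 ℓ 2 (by omega)
        have r3 := Hp_coeff_fac 2 ℓ 3 (by omega)
        norm_num [Nat.descFactorial, Nat.factorial, bernoulli'_two, bernoulli'_one,
          bernoulli'_zero] at r1 r2 r3
        set L := (ℓ:ℚ) with hLdef
        have hL : (2:ℚ) ≤ L := by rw [hLdef]; exact_mod_cast hℓ
        have v1 : (Hp 2 ℓ).coeff 1 = (L-1)/2 := by linarith
        have v2 : (Hp 2 ℓ).coeff 2 = 3*(L^2-1)/2 := by linarith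
        have v3 : (Hp 2 ℓ).coeff 3 = L^3-1 := by linarith
        rw [v1, v2, v3] at key'
        have hfinal : (L-1)^2 * (L^2 + 10*L + 1) = 0 := by linear_combination 4*key'
        have hpos : (0:ℚ) < (L-1)^2 * (L^2 + 10*L + 1) := by nlinarith
        exact absurd hfinal (ne_of_gt hpos)
      · -- k ≥ 4
        have h2z := hA2z hke hk4
        rw [hcoeff 2, if_pos (by omega)] at h2z
        have : (2 - p) = 1 := by omega
        rw [this, hg1] at h2z
        have hqne : (q : ℂ) ≠ 0 := Nat.cast_ne_zero.mpr (by omega)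
        rcases mul_eq_zero.mp h2z with h' | h'
        · exact hc h'
        · rcases mul_eq_zero.mp h' with h'' | h''
          · exact pow_ne_zero _ hnb h''
          · exact hqne h''
    · -- k odd, so k ≥ 5
      have hk5 : 5 ≤ k := by
        rw [Nat.odd_iff] at hko; omega
      have h1z := hA1z hko
      have h2ne := hA2ne hko
      have h3z := hA3z hko hk5
      have hp_ne1 : p ≠ 1 := by
        intro hp1'
        rw [hcoeff 1, if_pos (by omega)] at h1z
        have : (1 - p) = 0 := by omega
        rw [this, hg0] at h1z
        rcases mul_eq_zero.mp h1z with h' | h'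
        · exact hc h'
        · exact pow_ne_zero _ hnb h'
      have hp_eq : p = 2 := by
        by_contra hne2
        have hp3 : 3 ≤ p := by omega
        exact h2ne (by rw [hcoeff 2, if_neg (by omega)])
      have hq4 : 4 ≤ q := by omega
      rw [hcoeff 3, if_pos (by omega)] at h3z
      have : (3 - p) = 1 := by omega
      rw [this, hg1] at h3z
      have hqne : (q : ℂ) ≠ 0 := Nat.cast_ne_zero.mpr (by omega)
      rcases mul_eq_zero.mp h3z with h' | h'
      · exact hc h'
      · rcases mul_eq_zero.mp h' with h'' | h''
        · exact pow_ne_zero _ hnb h''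
        · exact hqne h''
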